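/- Let d and t be positive integers with t ≤ d, and let Z be a subgroup of the symmetric group S_d on {1,…,d} that is (t−1)-transitive and t-homogeneous. Then for every point x ∈ ℝ^d and every real polynomial f in d variables of total degree at most t, (1/|S_d·x|) ∑_{y ∈ S_d·x} f(y) = (1/|Z·x|) ∑_{y ∈ Z·x} f(y), where for a subset Z of S_d the orbit set is Z·x = {(x_{σ(1)},…,x_{σ(d)}) : σ ∈ Z}. -/

import Mathlib

/-- `Z` is `k`-transitive: `Z` acts transitively on ordered `k`-tuples of
distinct elements of `{1,…,d}` (encoded as embeddings `Fin k ↪ Fin d`). -/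
def IsKTransitive {d : ℕ} (Z : Subgroup (Equiv.Perm (Fin d))) (k : ℕ) : Prop :=
  ∀ a b : Fin k ↪ Fin d, ∃ σ ∈ Z, ∀ i, σ (a i) = b i

/-- `Z` is `k`-homogeneous: `Z` acts transitively on `k`-element subsets of `{1,…,d}`. -/
def IsKHomogeneous {d : ℕ} (Z : Subgroup (Equiv.Perm (Fin d))) (k : ℕ) : Prop :=
  ∀ A B : Finset (Fin d), A.card = k → B.card = k → ∃ σ ∈ Z, A.image σ = B

/-- The orbit set `Z·x = {(x_{σ(1)},…,x_{σ(d)}) : σ ∈ Z}` as a finite set. -/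
noncomputable def permOrbit {d : ℕ} (Z : Set (Equiv.Perm (Fin d))) (x : Fin d → ℝ) :
    Finset (Fin d → ℝ) :=
  (Set.Finite.image (fun σ : Equiv.Perm (Fin d) => x ∘ ⇑σ) (Set.toFinite Z)).toFinset

section AuxAveraging

variable {d : ℕ}

/-- Left-equivariant fiberwise averaging lemma. -/
lemma avg_left {β : Type} [DecidableEq β] (Gf : Finset (Equiv.Perm (Fin d)))
    (h1 : (1 : Equiv.Perm (Fin d)) ∈ Gf)
    (hmul : ∀ a ∈ Gf, ∀ b ∈ Gf, a * b ∈ Gf)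
    (hinv : ∀ a ∈ Gf, a⁻¹ ∈ Gf)
    (Φ : Equiv.Perm (Fin d) → β)
    (hΦ : ∀ τ ρ σ, Φ ρ = Φ σ → Φ (τ * ρ) = Φ (τ * σ))
    (V : β → ℝ) :
    (Gf.card : ℝ)⁻¹ * ∑ σ ∈ Gf, V (Φ σ) =
      ((Gf.image Φ).card : ℝ)⁻¹ * ∑ b ∈ Gf.image Φ, V b := by
  classical
  set c := (Gf.filter fun ρ => Φ ρ = Φ 1).card with hc
  have hfib : ∀ b ∈ Gf.image Φ, (Gf.filter fun ρ => Φ ρ = b).card = c := by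
    intro b hb
    obtain ⟨σ₀, hσ₀, rfl⟩ := Finset.mem_image.mp hb
    rw [hc]
    refine Finset.card_nbij' (fun σ => σ₀⁻¹ * σ) (fun ρ => σ₀ * ρ) ?_ ?_ ?_ ?_
    · intro σ hσ
      simp only [Finset.mem_coe, Finset.mem_filter] at hσ ⊢
      refine ⟨hmul _ (hinv _ hσ₀) _ hσ.1, ?_⟩
      have := hΦ σ₀⁻¹ σ σ₀ hσ.2
      simpa using this
    · intro ρ hρ
      simp only [Finset.mem_coe, Finset.mem_filter] at hρ ⊢
      refine ⟨hmul _ hσ₀ _ hρ.1, ?_⟩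
      have := hΦ σ₀ ρ 1 hρ.2
      simpa using this
    · intro σ _; group
    · intro ρ _; group
  have hnonempty : (Gf.image Φ).Nonempty := ⟨Φ 1, Finset.mem_image_of_mem _ h1⟩
  have hc0 : 0 < c := Finset.card_pos.mpr ⟨1, Finset.mem_filter.mpr ⟨h1, rfl⟩⟩
  have hsum : ∑ σ ∈ Gf, V (Φ σ) = (c : ℝ) * ∑ b ∈ Gf.image Φ, V b := by
    rw [Finset.sum_comp]
    rw [Finset.mul_sum]
    refine Finset.sum_congr rfl fun b hb => ?_
    rw [hfib b hb, nsmul_eq_mul]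
  have hcard : Gf.card = (Gf.image Φ).card * c := by
    rw [Finset.card_eq_sum_card_image Φ Gf]
    rw [Finset.sum_congr rfl hfib, Finset.sum_const, smul_eq_mul]
  rw [hsum, hcard]
  have h1' : ((Gf.image Φ).card : ℝ) ≠ 0 := by positivity
  have h2' : (c : ℝ) ≠ 0 := by positivity
  push_cast
  field_simp

/-- Right-equivariant fiberwise averaging lemma. -/
lemma avg_right {β : Type} [DecidableEq β] (Gf : Finset (Equiv.Perm (Fin d)))
    (h1 : (1 : Equiv.Perm (Fin d)) ∈ Gf)
    (hmul : ∀ a ∈ Gf, ∀ b ∈ Gf, a * b ∈ Gf)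
    (hinv : ∀ a ∈ Gf, a⁻¹ ∈ Gf)
    (Φ : Equiv.Perm (Fin d) → β)
    (hΦ : ∀ τ ρ σ, Φ ρ = Φ σ → Φ (ρ * τ) = Φ (σ * τ))
    (V : β → ℝ) :
    (Gf.card : ℝ)⁻¹ * ∑ σ ∈ Gf, V (Φ σ) =
      ((Gf.image Φ).card : ℝ)⁻¹ * ∑ b ∈ Gf.image Φ, V b := by
  classical
  set c := (Gf.filter fun ρ => Φ ρ = Φ 1).card with hc
  have hfib : ∀ b ∈ Gf.image Φ, (Gf.filter fun ρ => Φ ρ = b).card = c := by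
    intro b hb
    obtain ⟨σ₀, hσ₀, rfl⟩ := Finset.mem_image.mp hb
    rw [hc]
    refine Finset.card_nbij' (fun σ => σ * σ₀⁻¹) (fun ρ => ρ * σ₀) ?_ ?_ ?_ ?_
    · intro σ hσ
      simp only [Finset.mem_coe, Finset.mem_filter] at hσ ⊢
      refine ⟨hmul _ hσ.1 _ (hinv _ hσ₀), ?_⟩
      have := hΦ σ₀⁻¹ σ σ₀ hσ.2
      simpa using this
    · intro ρ hρ
      simp only [Finset.mem_coe, Finset.mem_filter] at hρ ⊢
      refine ⟨hmul _ hρ.1 _ hσ₀, ?_⟩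
      have := hΦ σ₀ ρ 1 hρ.2
      simpa using this
    · intro σ _; group
    · intro ρ _; group
  have hnonempty : (Gf.image Φ).Nonempty := ⟨Φ 1, Finset.mem_image_of_mem _ h1⟩
  have hc0 : 0 < c := Finset.card_pos.mpr ⟨1, Finset.mem_filter.mpr ⟨h1, rfl⟩⟩
  have hsum : ∑ σ ∈ Gf, V (Φ σ) = (c : ℝ) * ∑ b ∈ Gf.image Φ, V b := by
    rw [Finset.sum_comp]
    rw [Finset.mul_sum]
    refine Finset.sum_congr rfl fun b hb => ?_
    rw [hfib b hb, nsmul_eq_mul]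
  have hcard : Gf.card = (Gf.image Φ).card * c := by
    rw [Finset.card_eq_sum_card_image Φ Gf]
    rw [Finset.sum_congr rfl hfib, Finset.sum_const, smul_eq_mul]
  rw [hsum, hcard]
  have h1' : ((Gf.image Φ).card : ℝ) ≠ 0 := by positivity
  have h2' : (c : ℝ) ≠ 0 := by positivity
  push_cast
  field_simp

lemma extend_emb {k : ℕ} (h : k < d) (a : Fin k ↪ Fin d) :
    ∃ a' : Fin (k + 1) ↪ Fin d, ∀ i : Fin k, a' i.castSucc = a i := by
  have hns : ¬ Function.Surjective a := by
    intro hs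
    have := Fintype.card_le_of_surjective a hs
    simp at this
    omega
  rw [Function.Surjective] at hns
  push_neg at hns
  obtain ⟨y, hy⟩ := hns
  have hinj : Function.Injective (Fin.snoc (⇑a) y : Fin (k + 1) → Fin d) := by
    intro i j hij
    rcases Fin.eq_castSucc_or_eq_last i with ⟨i', rfl⟩ | rfl <;>
      rcases Fin.eq_castSucc_or_eq_last j with ⟨j', rfl⟩ | rfl
    · simp only [Fin.snoc_castSucc] at hij
      exact congrArg Fin.castSucc (a.injective hij)
    · simp only [Fin.snoc_castSucc, Fin.snoc_last] at hij
      exact absurd hij (hy i')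
    · simp only [Fin.snoc_castSucc, Fin.snoc_last] at hij
      exact absurd hij.symm (hy j')
    · rfl
  exact ⟨⟨Fin.snoc (⇑a) y, hinj⟩, fun i => by simp [Fin.snoc_castSucc]⟩

lemma trans_step (Z : Subgroup (Equiv.Perm (Fin d))) (m : ℕ) (hm : m < d)
    (h : IsKTransitive Z (m + 1)) : IsKTransitive Z m := by
  intro a b
  obtain ⟨a', ha'⟩ := extend_emb hm a
  obtain ⟨b', hb'⟩ := extend_emb hm b
  obtain ⟨σ, hσZ, hσ⟩ := h a' b'
  exact ⟨σ, hσZ, fun i => by rw [← ha', ← hb']; exact hσ i.castSucc⟩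

lemma trans_le (Z : Subgroup (Equiv.Perm (Fin d))) :
    ∀ m, m ≤ d → IsKTransitive Z m → ∀ k, k ≤ m → IsKTransitive Z k := by
  intro m
  induction m with
  | zero => intro _ h k hk; interval_cases k; exact h
  | succ n ih =>
    intro hmd h k hk
    rcases Nat.eq_or_lt_of_le hk with rfl | hlt
    · exact h
    · exact ih (by omega) (trans_step Z n (by omega) h) k (by omega)

end AuxAveraging

theorem stmt0 (d t : ℕ) (hd : 0 < d) (ht : 0 < t) (htd : t ≤ d)
    (Z : Subgroup (Equiv.Perm (Fin d)))
    (hZtrans : IsKTransitive Z (t - 1)) (hZhom : IsKHomogeneous Z t)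
    (x : Fin d → ℝ) (f : MvPolynomial (Fin d) ℝ) (hf : f.totalDegree ≤ t) :
    (1 / ((permOrbit (Set.univ : Set (Equiv.Perm (Fin d))) x).card : ℝ)) *
        ∑ y ∈ permOrbit (Set.univ : Set (Equiv.Perm (Fin d))) x, MvPolynomial.eval y f
      = (1 / ((permOrbit (Z : Set (Equiv.Perm (Fin d))) x).card : ℝ)) *
          ∑ y ∈ permOrbit (Z : Set (Equiv.Perm (Fin d))) x, MvPolynomial.eval y f := by
  classical
  simp only [one_div]
  -- the finsets of permutations
  set Tf : Finset (Equiv.Perm (Fin d)) :=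
    (Set.toFinite (Set.univ : Set (Equiv.Perm (Fin d)))).toFinset with hTf
  set Zf : Finset (Equiv.Perm (Fin d)) :=
    (Set.toFinite (Z : Set (Equiv.Perm (Fin d)))).toFinset with hZf
  have hmemT : ∀ σ, σ ∈ Tf := by intro σ; simp [hTf]
  have hmemZ : ∀ σ, σ ∈ Zf ↔ σ ∈ Z := by
    intro σ; rw [hZf, Set.Finite.mem_toFinset, SetLike.mem_coe]
  -- the orbit is the image of the permutation finset
  have horb : ∀ (S : Set (Equiv.Perm (Fin d))),
      permOrbit S x = (Set.toFinite S).toFinset.image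
        (fun σ : Equiv.Perm (Fin d) => x ∘ ⇑σ) := by
    intro S
    exact Set.Finite.toFinset_image _ (Set.toFinite S) _
  -- the right-equivariance of σ ↦ x ∘ σ
  have hΦr : ∀ τ ρ σ : Equiv.Perm (Fin d),
      x ∘ ⇑ρ = x ∘ ⇑σ → x ∘ ⇑(ρ * τ) = x ∘ ⇑(σ * τ) := by
    intro τ ρ σ h
    funext i
    have := congrFun h (τ i)
    simpa using this
  -- reduce orbit averages to group averages
  have horbT : (((permOrbit (Set.univ : Set (Equiv.Perm (Fin d))) x).card : ℝ))⁻¹ *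
      ∑ y ∈ permOrbit (Set.univ : Set (Equiv.Perm (Fin d))) x, MvPolynomial.eval y f
      = ((Tf.card : ℝ))⁻¹ * ∑ σ ∈ Tf, MvPolynomial.eval (x ∘ ⇑σ) f := by
    rw [horb, ← hTf]
    exact (avg_right Tf (hmemT 1) (fun a _ b _ => hmemT _) (fun a _ => hmemT _)
      (fun σ => x ∘ ⇑σ) hΦr (fun y => MvPolynomial.eval y f)).symm
  have horbZ : (((permOrbit (Z : Set (Equiv.Perm (Fin d))) x).card : ℝ))⁻¹ *
      ∑ y ∈ permOrbit (Z : Set (Equiv.Perm (Fin d))) x, MvPolynomial.eval y f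
      = ((Zf.card : ℝ))⁻¹ * ∑ σ ∈ Zf, MvPolynomial.eval (x ∘ ⇑σ) f := by
    rw [horb, ← hZf]
    exact (avg_right Zf ((hmemZ 1).mpr Z.one_mem)
      (fun a ha b hb => (hmemZ _).mpr (Z.mul_mem ((hmemZ a).mp ha) ((hmemZ b).mp hb)))
      (fun a ha => (hmemZ _).mpr (Z.inv_mem ((hmemZ a).mp ha)))
      (fun σ => x ∘ ⇑σ) hΦr (fun y => MvPolynomial.eval y f)).symm
  rw [horbT, horbZ]
  -- expand the polynomial into monomials
  have expand : ∀ Gf : Finset (Equiv.Perm (Fin d)),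
      ((Gf.card : ℝ))⁻¹ * ∑ σ ∈ Gf, MvPolynomial.eval (x ∘ ⇑σ) f
        = ∑ α ∈ f.support, f.coeff α *
            (((Gf.card : ℝ))⁻¹ * ∑ σ ∈ Gf, ∏ i ∈ α.support, x (σ i) ^ α i) := by
    intro Gf
    simp only [MvPolynomial.eval_eq, Function.comp_apply]
    rw [Finset.sum_comm, Finset.mul_sum]
    refine Finset.sum_congr rfl fun α _ => ?_
    rw [← Finset.mul_sum]
    ring
  rw [expand, expand]
  refine Finset.sum_congr rfl fun α hα => ?_
  congr 1
  -- the per-monomial statement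
  set A := α.support with hA
  have hmt : ∑ i ∈ A, α i ≤ t := le_trans (MvPolynomial.le_totalDegree hα) hf
  have hone_le : ∀ i ∈ A, 1 ≤ α i := by
    intro i hi
    have := Finsupp.mem_support_iff.mp hi
    omega
  have hkm : A.card ≤ ∑ i ∈ A, α i := by
    calc A.card = ∑ _i ∈ A, 1 := by rw [Finset.sum_const, smul_eq_mul, mul_one]
    _ ≤ ∑ i ∈ A, α i := Finset.sum_le_sum hone_le
  have hkt : A.card ≤ t := le_trans hkm hmt
  by_cases hcase : A.card < t
  · -- use (A.card)-transitivity
    set Φ : Equiv.Perm (Fin d) → ({i // i ∈ A} → Fin d) := fun σ i => σ ↑i with hΦdef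
    have hΦl : ∀ τ ρ σ : Equiv.Perm (Fin d), Φ ρ = Φ σ → Φ (τ * ρ) = Φ (τ * σ) := by
      intro τ ρ σ h
      funext i
      have := congrFun h i
      simp only [hΦdef, Equiv.Perm.mul_apply] at this ⊢
      rw [this]
    set V : ({i // i ∈ A} → Fin d) → ℝ := fun g => ∏ i : {i // i ∈ A}, x (g i) ^ α ↑i
      with hVdef
    have hPV : ∀ σ : Equiv.Perm (Fin d), V (Φ σ) = ∏ i ∈ A, x (σ i) ^ α i := by
      intro σ
      exact Finset.prod_coe_sort A (fun i => x (σ i) ^ α i)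
    have himage : Zf.image Φ = Tf.image Φ := by
      apply Finset.Subset.antisymm
      · exact Finset.image_subset_image (fun a _ => hmemT a)
      · intro g hg
        obtain ⟨σ, _, rfl⟩ := Finset.mem_image.mp hg
        have ktrans : IsKTransitive Z A.card :=
          trans_le Z (t - 1) (by omega) hZtrans A.card (by omega)
        set a : Fin A.card ↪ Fin d := (A.orderEmbOfFin rfl).toEmbedding with ha
        obtain ⟨τ, hτZ, hτ⟩ := ktrans a (a.trans σ.toEmbedding)
        refine Finset.mem_image.mpr ⟨τ, (hmemZ τ).mpr hτZ, ?_⟩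
        funext i
        obtain ⟨j, hj⟩ : ∃ j, A.orderEmbOfFin rfl j = ↑i := by
          have h1 : (i : Fin d) ∈ Set.range (A.orderEmbOfFin rfl) := by
            rw [Finset.range_orderEmbOfFin]; exact i.2
          exact h1
        have := hτ j
        simp only [ha, Function.Embedding.trans_apply, Equiv.coe_toEmbedding,
          RelEmbedding.coe_toEmbedding, Equiv.toEmbedding_apply] at this
        simp only [hΦdef]
        rw [← hj]
        exact this
    calc ((Tf.card : ℝ))⁻¹ * ∑ σ ∈ Tf, ∏ i ∈ A, x (σ i) ^ α i
        = ((Tf.card : ℝ))⁻¹ * ∑ σ ∈ Tf, V (Φ σ) := by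
          rw [Finset.sum_congr rfl fun σ _ => (hPV σ).symm]
      _ = (((Tf.image Φ).card : ℝ))⁻¹ * ∑ b ∈ Tf.image Φ, V b :=
          avg_left Tf (hmemT 1) (fun a _ b _ => hmemT _) (fun a _ => hmemT _) Φ hΦl V
      _ = (((Zf.image Φ).card : ℝ))⁻¹ * ∑ b ∈ Zf.image Φ, V b := by rw [himage]
      _ = ((Zf.card : ℝ))⁻¹ * ∑ σ ∈ Zf, V (Φ σ) :=
          (avg_left Zf ((hmemZ 1).mpr Z.one_mem)
            (fun a ha b hb => (hmemZ _).mpr (Z.mul_mem ((hmemZ a).mp ha) ((hmemZ b).mp hb)))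
            (fun a ha => (hmemZ _).mpr (Z.inv_mem ((hmemZ a).mp ha))) Φ hΦl V).symm
      _ = ((Zf.card : ℝ))⁻¹ * ∑ σ ∈ Zf, ∏ i ∈ A, x (σ i) ^ α i := by
          rw [Finset.sum_congr rfl fun σ _ => hPV σ]
  · -- A.card = t : use t-homogeneity
    have hkeq : A.card = t := le_antisymm hkt (not_lt.mp hcase)
    have hsum_eq : ∑ i ∈ A, α i = A.card := le_antisymm (hkeq ▸ hmt) hkm
    have hone : ∀ i ∈ A, α i = 1 := by
      intro i hi
      by_contra hne
      have h2 : 1 < α i := by have := hone_le i hi; omega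
      have : ∑ _i ∈ A, 1 < ∑ i ∈ A, α i :=
        Finset.sum_lt_sum hone_le ⟨i, hi, h2⟩
      simp only [Finset.sum_const, smul_eq_mul, mul_one] at this
      omega
    have hP : ∀ σ : Equiv.Perm (Fin d),
        ∏ i ∈ A, x (σ i) ^ α i = ∏ i ∈ A, x (σ i) := by
      intro σ
      exact Finset.prod_congr rfl fun i hi => by rw [hone i hi, pow_one]
    set Φ : Equiv.Perm (Fin d) → Finset (Fin d) := fun σ => A.image ⇑σ with hΦdef
    have hΦl : ∀ τ ρ σ : Equiv.Perm (Fin d), Φ ρ = Φ σ → Φ (τ * ρ) = Φ (τ * σ) := by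
      intro τ ρ σ h
      simp only [hΦdef, Equiv.Perm.coe_mul, ← Finset.image_image] at h ⊢
      rw [h]
    set V : Finset (Fin d) → ℝ := fun B => ∏ j ∈ B, x j with hVdef
    have hPV : ∀ σ : Equiv.Perm (Fin d), V (Φ σ) = ∏ i ∈ A, x (σ i) ^ α i := by
      intro σ
      rw [hP σ]
      exact Finset.prod_image (fun i _ j _ h => σ.injective h)
    have himage : Zf.image Φ = Tf.image Φ := by
      apply Finset.Subset.antisymm
      · exact Finset.image_subset_image (fun a _ => hmemT a)
      · intro B hB
        obtain ⟨σ, _, rfl⟩ := Finset.mem_image.mp hB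
        have hcard : (A.image ⇑σ).card = t := by
          rw [Finset.card_image_of_injective _ σ.injective, hkeq]
        obtain ⟨τ, hτZ, hτ⟩ := hZhom A (A.image ⇑σ) hkeq hcard
        exact Finset.mem_image.mpr ⟨τ, (hmemZ τ).mpr hτZ, hτ⟩
    calc ((Tf.card : ℝ))⁻¹ * ∑ σ ∈ Tf, ∏ i ∈ A, x (σ i) ^ α i
        = ((Tf.card : ℝ))⁻¹ * ∑ σ ∈ Tf, V (Φ σ) := by
          rw [Finset.sum_congr rfl fun σ _ => (hPV σ).symm]
      _ = (((Tf.image Φ).card : ℝ))⁻¹ * ∑ b ∈ Tf.image Φ, V b :=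
          avg_left Tf (hmemT 1) (fun a _ b _ => hmemT _) (fun a _ => hmemT _) Φ hΦl V
      _ = (((Zf.image Φ).card : ℝ))⁻¹ * ∑ b ∈ Zf.image Φ, V b := by rw [himage]
      _ = ((Zf.card : ℝ))⁻¹ * ∑ σ ∈ Zf, V (Φ σ) :=
          (avg_left Zf ((hmemZ 1).mpr Z.one_mem)
            (fun a ha b hb => (hmemZ _).mpr (Z.mul_mem ((hmemZ a).mp ha) ((hmemZ b).mp hb)))
            (fun a ha => (hmemZ _).mpr (Z.inv_mem ((hmemZ a).mp ha))) Φ hΦl V).symm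
      _ = ((Zf.card : ℝ))⁻¹ * ∑ σ ∈ Zf, ∏ i ∈ A, x (σ i) ^ α i := by
          rw [Finset.sum_congr rfl fun σ _ => hPV σ]
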